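/- Fix λ > 1/2 and M ≥ 36, let r_n = M·2^n, r_{n,k} = r_{n+1} − 1 + k/[r_n^λ] (1 ≤ k ≤ [r_n^λ]), and let g(z) = Σ_{n=1}^∞ (1/[r_n^λ]) Σ_{k=1}^{[r_n^λ]} 2z/(r_{n,k}² − z²). Then for every n ≥ 1 and every z in the closed annulus (4/3)r_n ≤ |z| ≤ (5/3)r_n, one has |g(z)| ≤ 30n/(7r_n) + 4/r_n; in particular, sup{|g(z)| : (4/3)r_n ≤ |z| ≤ (5/3)r_n} → 0 as n → ∞. -/

import Mathlib

open Filter Topology Metric Set MeasureTheory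
open scoped Classical

noncomputable section

namespace PaperDyn

/-- `log⁺ x = max (log x) 0`. -/
def logPlus (x : ℝ) : ℝ := max (Real.log x) 0

/-- Multiplicity of `z` as an `a`-point of `f` (`0` if `z` is not an `a`-point). -/
def aPointMult (f : ℂ → ℂ) (a : ℂ) (z : ℂ) : ℕ :=
  if h : MeromorphicAt (fun w => f w - a) z then ((meromorphicOrderAt (fun w => f w - a) z).untopD 0).toNat else 0

/-- Multiplicity of `z` as a pole of `f` (`0` if `z` is not a pole). -/
def poleMult (f : ℂ → ℂ) (z : ℂ) : ℕ :=
  if h : MeromorphicAt f z then (-((meromorphicOrderAt f z).untopD 0)).toNat else 0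

/-- `z` is a pole of `f`. -/
def IsPole (f : ℂ → ℂ) (z : ℂ) : Prop :=
  Tendsto (fun w => ‖f w‖) (𝓝[≠] z) atTop

/-- Number of `a`-points of `f` in `S`, counted with multiplicity. -/
def countA (f : ℂ → ℂ) (a : ℂ) (S : Set ℂ) : ℕ := ∑ᶠ z ∈ S, aPointMult f a z

/-- Number of poles of `f` in `S`, counted with multiplicity. -/
def countPoles (f : ℂ → ℂ) (S : Set ℂ) : ℕ := ∑ᶠ z ∈ S, poleMult f z

/-- Number of times `f` takes the (possibly infinite, `none = ∞`) value `a` on `S`. -/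
def valueCount (f : ℂ → ℂ) (a : Option ℂ) (S : Set ℂ) : ℕ :=
  match a with
  | none => countPoles f S
  | some c => countA f c S

/-- The integrated counting function `N(r, Ω, f = a)` for a value `a` on the sphere. -/
def valueN (f : ℂ → ℂ) (a : Option ℂ) (Ω : Set ℂ) (r : ℝ) : ℝ :=
  ∫ t in (1:ℝ)..r, (valueCount f a (Ω ∩ Metric.ball 0 t) : ℝ) / t

/-- `n(t, f)` : number of poles of `f` in `|z| ≤ t`, counted with multiplicity. -/
def nPoles (f : ℂ → ℂ) (t : ℝ) : ℕ := countPoles f (Metric.closedBall 0 t)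

/-- The Nevanlinna proximity function `m(r,f)`. -/
def proximity (f : ℂ → ℂ) (r : ℝ) : ℝ :=
  (2 * Real.pi)⁻¹ * ∫ θ in (0:ℝ)..(2 * Real.pi),
    logPlus ‖f ((r : ℂ) * Complex.exp (θ * Complex.I))‖

/-- The integrated pole-counting function `N(r,f)`. -/
def nevN (f : ℂ → ℂ) (r : ℝ) : ℝ :=
  (∫ t in (0:ℝ)..r, ((nPoles f t : ℝ) - (nPoles f 0 : ℝ)) / t) + (nPoles f 0 : ℝ) * Real.log r

/-- The Nevanlinna characteristic `T(r,f) = m(r,f) + N(r,f)`. -/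
def nevT (f : ℂ → ℂ) (r : ℝ) : ℝ := proximity f r + nevN f r

/-- The growth order `ρ(f) = limsup_{r→∞} log T(r,f) / log r`, as an extended real. -/
def growthOrder (f : ℂ → ℂ) : EReal :=
  limsup (fun r : ℝ => ((Real.log (nevT f r) / Real.log r : ℝ) : EReal)) atTop

/-- The lower order `λ(f) = liminf_{r→∞} log T(r,f) / log r`, as an extended real. -/
def lowerOrder (f : ℂ → ℂ) : EReal :=
  liminf (fun r : ℝ => ((Real.log (nevT f r) / Real.log r : ℝ) : EReal)) atTop

/-- The maximum modulus `M(r,f)`. -/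
def maxModulus (f : ℂ → ℂ) (r : ℝ) : ℝ := sSup ((fun z => ‖f z‖) '' Metric.sphere (0:ℂ) r)

/-- The minimum modulus `L(r,f)`. -/
def minModulus (f : ℂ → ℂ) (r : ℝ) : ℝ := sInf ((fun z => ‖f z‖) '' Metric.sphere (0:ℂ) r)

/-- The Nevanlinna deficiency of `f` at `∞`. -/
def deltaInfty (f : ℂ → ℂ) : EReal :=
  liminf (fun r : ℝ => ((proximity f r / nevT f r : ℝ) : EReal)) atTop

/-- The Nevanlinna deficiency of `f` at a finite value `a`. -/
def delta (a : ℂ) (f : ℂ → ℂ) : EReal := deltaInfty (fun z => (f z - a)⁻¹)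

/-- A rational function. -/
def IsRationalFn (f : ℂ → ℂ) : Prop :=
  ∃ p q : Polynomial ℂ, q ≠ 0 ∧ ∀ z : ℂ, q.eval z ≠ 0 → f z = p.eval z / q.eval z

/-- A transcendental meromorphic function on `ℂ`. -/
def TranscendentalMeromorphic (f : ℂ → ℂ) : Prop :=
  MeromorphicOn f Set.univ ∧ ¬ IsRationalFn f

/-- A transcendental entire function. -/
def TranscendentalEntire (f : ℂ → ℂ) : Prop :=
  Differentiable ℂ f ∧ ¬ ∃ p : Polynomial ℂ, ∀ z, f z = p.eval z

/-- The chordal (spherical) distance between two finite points. -/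
def sphDistC (a b : ℂ) : ℝ :=
  dist a b / (Real.sqrt (1 + ‖a‖ ^ 2) * Real.sqrt (1 + ‖b‖ ^ 2))

/-- The chordal (spherical) distance on the Riemann sphere (`none = ∞`). -/
def sphDist : Option ℂ → Option ℂ → ℝ
  | some a, some b => sphDistC a b
  | some a, none => 1 / Real.sqrt (1 + ‖a‖ ^ 2)
  | none, some b => 1 / Real.sqrt (1 + ‖b‖ ^ 2)
  | none, none => 0

/-- The Fatou set of `f`: points having a neighbourhood on which all the iterates are
defined and form a normal (equicontinuous w.r.t. the spherical metric) family. -/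
def FatouSet (f : ℂ → ℂ) : Set ℂ :=
  {z | ∃ U ∈ 𝓝 z, (∀ (n : ℕ) (w : ℂ), w ∈ U → ¬ IsPole f (f^[n] w)) ∧
    ∀ ε > 0, ∃ δ > 0, ∀ (n : ℕ), ∀ w ∈ U, ∀ w' ∈ U, dist w w' < δ →
      sphDistC (f^[n] w) (f^[n] w') < ε}

/-- The Julia set of `f` (its part in the finite plane). -/
def JuliaSet (f : ℂ → ℂ) : Set ℂ := (FatouSet f)ᶜ

/-- The escaping set of `f`. -/
def EscapingSet (f : ℂ → ℂ) : Set ℂ :=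
  {z | (∀ n : ℕ, ¬ IsPole f (f^[n] z)) ∧ Tendsto (fun n => ‖f^[n] z‖) atTop atTop}

/-- The open angle `{z ≠ 0 : α < arg z < β}` (arguments understood modulo `2π`). -/
def AngSector (α β : ℝ) : Set ℂ :=
  {z | z ≠ 0 ∧ ∃ k : ℤ, α < Complex.arg z + 2 * Real.pi * k ∧
    Complex.arg z + 2 * Real.pi * k < β}

/-- `θ` is a limit point of the sequence of arguments `arg (f^[n] a)`. -/
def IsArgLimitPoint (f : ℂ → ℂ) (a : ℂ) (θ : ℝ) : Prop :=
  ∀ ε > 0, ∃ᶠ n in atTop, f^[n] a ∈ AngSector (θ - ε) (θ + ε)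

/-- `arg z = θ` is a Borel direction of order (at least) `ρ` of `f`. -/
def IsBorelDirection (f : ℂ → ℂ) (θ : ℝ) (ρ : ℝ) : Prop :=
  ∀ ε > 0, ∃ a₁ a₂ : Option ℂ, ∀ a : Option ℂ, a ≠ a₁ → a ≠ a₂ →
    (ρ : EReal) ≤ limsup (fun r : ℝ =>
      ((logPlus (valueN f a (AngSector (θ - ε) (θ + ε)) r) / Real.log r : ℝ) : EReal)) atTop

/-- `arg z = θ` is a Borel direction of infinite order of `f`. -/
def IsBorelDirectionInf (f : ℂ → ℂ) (θ : ℝ) : Prop :=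
  ∀ ε > 0, ∃ a₁ a₂ : Option ℂ, ∀ a : Option ℂ, a ≠ a₁ → a ≠ a₂ →
    limsup (fun r : ℝ =>
      ((logPlus (valueN f a (AngSector (θ - ε) (θ + ε)) r) / Real.log r : ℝ) : EReal)) atTop = ⊤

/-- The disk `|z - z₀| < ε|z₀|` is a filling disk of `f` with index `m` : `f` assumes on it
every spherical value at least `m` times, except possibly values lying in two spherical
disks of radius at most `e^{-m}`. -/
def IsFillingDisk (f : ℂ → ℂ) (z₀ : ℂ) (ε : ℝ) (m : ℝ) : Prop :=
  ∃ c₁ c₂ : Option ℂ, ∀ a : Option ℂ,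
    Real.exp (-m) < sphDist a c₁ → Real.exp (-m) < sphDist a c₂ →
      m ≤ (valueCount f a (Metric.ball z₀ (ε * ‖z₀‖)) : ℝ)

/-- The open round annulus `A(r,R) = {z : r < |z| < R}`. -/
def Annulus (r R : ℝ) : Set ℂ := {z | r < ‖z‖ ∧ ‖z‖ < R}


/-- `r_n = M·2^n`. -/
def rSeq (M : ℝ) (n : ℕ) : ℝ := M * 2 ^ n

/-- `[r_n^λ]`, the integer part of `r_n^λ`. -/
def kSeq (lam M : ℝ) (n : ℕ) : ℕ := ⌊(rSeq M n) ^ lam⌋₊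

/-- `r_{n,k} = r_{n+1} − 1 + k/[r_n^λ]`. -/
def rnk (lam M : ℝ) (n k : ℕ) : ℝ := rSeq M (n + 1) - 1 + (k : ℝ) / (kSeq lam M n : ℝ)

/-- The set of points `±r_{n,k}` (the prospective poles of `g`). -/
def poleSet (lam M : ℝ) : Set ℂ :=
  {z | ∃ n, 1 ≤ n ∧ ∃ k, 1 ≤ k ∧ k ≤ kSeq lam M n ∧
    (z = ((rnk lam M n k : ℝ) : ℂ) ∨ z = -((rnk lam M n k : ℝ) : ℂ))}

/-- Partial sums of the series defining `g`. -/
def gPartial (lam M : ℝ) (N : ℕ) (z : ℂ) : ℂ :=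
  ∑ n ∈ Finset.Icc 1 N, ((kSeq lam M n : ℂ))⁻¹ *
    ∑ k ∈ Finset.Icc 1 (kSeq lam M n),
      ((((rnk lam M n k : ℝ) : ℂ) - z)⁻¹ - (((rnk lam M n k : ℝ) : ℂ) + z)⁻¹)

/-- The sum `g` of the full series (summed over `n ≥ 1`). -/
def gFun (lam M : ℝ) (z : ℂ) : ℂ :=
  ∑' n : ℕ, ((kSeq lam M (n + 1) : ℂ))⁻¹ *
    ∑ k ∈ Finset.Icc 1 (kSeq lam M (n + 1)),
      (2 * z / ((((rnk lam M (n + 1) k : ℝ) : ℂ)) ^ 2 - z ^ 2))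

/-! ### Auxiliary lemmas for Statement 17 -/

lemma aux_rSeq_pos {M : ℝ} (hM : 36 ≤ M) (m : ℕ) : 0 < rSeq M m := by
  have h0 : (0:ℝ) < M := by linarith
  unfold rSeq; positivity

lemma aux_rSeq_mono {M : ℝ} (hM : 36 ≤ M) {a b : ℕ} (h : a ≤ b) :
    rSeq M a ≤ rSeq M b := by
  unfold rSeq
  have h2 : (2:ℝ) ^ a ≤ 2 ^ b := pow_le_pow_right₀ (by norm_num) h
  nlinarith

lemma aux_rSeq_ge72 {M : ℝ} (hM : 36 ≤ M) {m : ℕ} (hm : 1 ≤ m) :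
    72 ≤ rSeq M m := by
  have h1 : rSeq M 1 ≤ rSeq M m := aux_rSeq_mono hM hm
  have h2 : rSeq M 1 = M * 2 := by unfold rSeq; norm_num
  linarith [h2 ▸ h1]

lemma aux_rSeq_succ (M : ℝ) (m : ℕ) : rSeq M (m + 1) = 2 * rSeq M m := by
  unfold rSeq; rw [pow_succ]; ring

lemma aux_kSeq_pos {lam M : ℝ} (hlam : 1 / 2 < lam) (hM : 36 ≤ M) {m : ℕ}
    (hm : 1 ≤ m) : 1 ≤ kSeq lam M m := by
  have hr : (1:ℝ) ≤ rSeq M m := by linarith [aux_rSeq_ge72 hM hm]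
  have h1 : (rSeq M m) ^ (0:ℝ) ≤ (rSeq M m) ^ lam :=
    Real.rpow_le_rpow_of_exponent_le hr (by linarith)
  rw [Real.rpow_zero] at h1
  exact Nat.le_floor (by exact_mod_cast h1)

lemma aux_rnk_le {lam M : ℝ} (hlam : 1 / 2 < lam) (hM : 36 ≤ M) {m k : ℕ}
    (hm : 1 ≤ m) (hk : k ≤ kSeq lam M m) : rnk lam M m k ≤ rSeq M (m + 1) := by
  have hK : (0:ℝ) < (kSeq lam M m : ℝ) := by
    exact_mod_cast aux_kSeq_pos hlam hM hm
  have h1 : (k:ℝ) / (kSeq lam M m : ℝ) ≤ 1 := by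
    rw [div_le_one hK]; exact_mod_cast hk
  unfold rnk; linarith

lemma aux_rnk_ge {lam M : ℝ} {m k : ℕ} :
    rSeq M (m + 1) - 1 ≤ rnk lam M m k := by
  have h1 : 0 ≤ (k:ℝ) / (kSeq lam M m : ℝ) := by positivity
  unfold rnk; linarith

/-- Basic estimate for one term of the series. -/
lemma aux_term_bound {ρ : ℝ} (hρ : 0 ≤ ρ) (z : ℂ) {c : ℝ} (hc : 0 < c)
    (h : c ≤ |ρ ^ 2 - ‖z‖ ^ 2|) :
    ‖2 * z / (((ρ : ℝ) : ℂ) ^ 2 - z ^ 2)‖ ≤ 2 * ‖z‖ / c := by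
  have hd : c ≤ ‖((ρ : ℝ) : ℂ) ^ 2 - z ^ 2‖ := by
    have h1 : |‖((ρ : ℝ) : ℂ) ^ 2‖ - ‖z ^ 2‖| ≤ ‖((ρ : ℝ) : ℂ) ^ 2 - z ^ 2‖ :=
      abs_norm_sub_norm_le _ _
    have h2 : ‖((ρ : ℝ) : ℂ) ^ 2‖ = ρ ^ 2 := by
      rw [norm_pow, Complex.norm_real, Real.norm_eq_abs, abs_of_nonneg hρ]
    have h3 : ‖z ^ 2‖ = ‖z‖ ^ 2 := norm_pow z 2
    rw [h2, h3] at h1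
    exact le_trans h h1
  have h2z : ‖2 * z / (((ρ : ℝ) : ℂ) ^ 2 - z ^ 2)‖
      = 2 * ‖z‖ / ‖((ρ : ℝ) : ℂ) ^ 2 - z ^ 2‖ := by
    rw [norm_div, norm_mul]; norm_num
  rw [h2z]
  gcongr

lemma aux_avg_bound {K : ℕ} (hK : 1 ≤ K) (t : ℕ → ℂ) {C : ℝ}
    (h : ∀ k ∈ Finset.Icc 1 K, ‖t k‖ ≤ C) :
    ‖((K : ℂ))⁻¹ * ∑ k ∈ Finset.Icc 1 K, t k‖ ≤ C := by
  have hC : 0 ≤ C := le_trans (norm_nonneg _) (h 1 (by simp [hK]))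
  have hKpos : (0:ℝ) < (K : ℝ) := by exact_mod_cast hK
  have h1 : ‖∑ k ∈ Finset.Icc 1 K, t k‖ ≤ (K : ℝ) * C := by
    calc ‖∑ k ∈ Finset.Icc 1 K, t k‖ ≤ ∑ k ∈ Finset.Icc 1 K, ‖t k‖ :=
          norm_sum_le _ _
      _ ≤ ∑ _k ∈ Finset.Icc 1 K, C := Finset.sum_le_sum h
      _ = (K : ℝ) * C := by
          rw [Finset.sum_const, nsmul_eq_mul, Nat.card_Icc]; norm_num
  rw [norm_mul, norm_inv, Complex.norm_natCast]
  calc (K : ℝ)⁻¹ * ‖∑ k ∈ Finset.Icc 1 K, t k‖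
      ≤ (K : ℝ)⁻¹ * ((K : ℝ) * C) := by gcongr
    _ = C := by field_simp

lemma aux_pow_sq (a : ℕ) : ((2:ℝ) ^ a) ^ 2 = 4 ^ a := by
  rw [← pow_mul, mul_comm, pow_mul]; norm_num

set_option maxHeartbeats 1600000 in
/-- bound for `g` on the annuli `(4/3)r_n ≤ |z| ≤ (5/3)r_n`. -/
theorem gFun_small_on_annuli (lam M : ℝ) (hlam : 1 / 2 < lam) (hM : 36 ≤ M) :
    (∀ n : ℕ, 1 ≤ n → ∀ z : ℂ,
      4 / 3 * rSeq M n ≤ ‖z‖ → ‖z‖ ≤ 5 / 3 * rSeq M n →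
      ‖gFun lam M z‖ ≤ 30 * n / (7 * rSeq M n) + 4 / rSeq M n) ∧
    Tendsto (fun n : ℕ => sSup {x : ℝ | ∃ z : ℂ,
        4 / 3 * rSeq M n ≤ ‖z‖ ∧ ‖z‖ ≤ 5 / 3 * rSeq M n ∧ x = ‖gFun lam M z‖})
      atTop (𝓝 0) := by
  have hM0 : (0:ℝ) < M := by linarith
  have main : ∀ n : ℕ, 1 ≤ n → ∀ z : ℂ,
      4 / 3 * rSeq M n ≤ ‖z‖ → ‖z‖ ≤ 5 / 3 * rSeq M n →
      ‖gFun lam M z‖ ≤ 30 * n / (7 * rSeq M n) + 4 / rSeq M n := by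
    intro n hn z hz1 hz2
    set R := rSeq M n with hRdef
    have hRpos : 0 < R := aux_rSeq_pos hM n
    have hR72 : 72 ≤ R := aux_rSeq_ge72 hM hn
    have hz0 : 0 < ‖z‖ := by linarith
    set F : ℕ → ℂ := fun j => ((kSeq lam M (j + 1) : ℂ))⁻¹ *
        ∑ k ∈ Finset.Icc 1 (kSeq lam M (j + 1)),
          (2 * z / ((((rnk lam M (j + 1) k : ℝ) : ℂ)) ^ 2 - z ^ 2)) with hFdef
    have hgz : gFun lam M z = ∑' j, F j := rfl
    -- bound for indices `m = j+1 ≤ n`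
    have key1 : ∀ j : ℕ, j + 1 ≤ n → ‖F j‖ ≤ 24 / (7 * R) := by
      intro j hj
      have hm1 : 1 ≤ j + 1 := Nat.le_add_left 1 j
      simp only [hFdef]
      apply aux_avg_bound (aux_kSeq_pos hlam hM hm1)
      intro k hk
      rw [Finset.mem_Icc] at hk
      set ρ := rnk lam M (j + 1) k with hρdef
      have hρle : ρ ≤ rSeq M (j + 2) := aux_rnk_le hlam hM hm1 hk.2
      have hρge : rSeq M (j + 2) - 1 ≤ ρ := aux_rnk_ge
      have h72 : 72 ≤ rSeq M (j + 2) := aux_rSeq_ge72 hM (by omega)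
      have hρ0 : 0 ≤ ρ := by linarith
      rcases lt_or_eq_of_le hj with hlt | heq
      · -- j + 1 < n
        have hρn : ρ ≤ R := le_trans hρle (aux_rSeq_mono hM (by omega))
        have h34 : ρ ≤ 3 / 4 * ‖z‖ := by linarith
        have hsq : ρ * ρ ≤ (3 / 4 * ‖z‖) * (3 / 4 * ‖z‖) :=
          mul_le_mul h34 h34 hρ0 (by positivity)
        have hcpos : (0:ℝ) < 7 / 16 * ‖z‖ ^ 2 :=
          mul_pos (by norm_num) (pow_pos hz0 2)
        have habs : 7 / 16 * ‖z‖ ^ 2 ≤ |ρ ^ 2 - ‖z‖ ^ 2| := by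
          have h5 : 7 / 16 * ‖z‖ ^ 2 ≤ -(ρ ^ 2 - ‖z‖ ^ 2) := by nlinarith
          exact le_trans h5 (neg_le_abs _)
        refine le_trans (aux_term_bound hρ0 z hcpos habs) ?_
        rw [div_le_div_iff₀ hcpos (by linarith)]
        nlinarith [mul_le_mul_of_nonneg_right hz1 (norm_nonneg z)]
      · -- j + 1 = n
        have h2R : rSeq M (j + 2) = 2 * R := by
          rw [show j + 2 = n + 1 from by omega, aux_rSeq_succ, ← hRdef]
        rw [h2R] at hρle hρge
        have hsq : (2 * R - 1) * (2 * R - 1) ≤ ρ * ρ :=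
          mul_le_mul hρge hρge (by linarith) hρ0
        have hzsq : ‖z‖ * ‖z‖ ≤ (5 / 3 * R) * (5 / 3 * R) :=
          mul_le_mul hz2 hz2 (norm_nonneg z) (by linarith)
        have hcpos : (0:ℝ) < 7 / 6 * R ^ 2 :=
          mul_pos (by norm_num) (pow_pos hRpos 2)
        have habs : 7 / 6 * R ^ 2 ≤ |ρ ^ 2 - ‖z‖ ^ 2| := by
          have h5 : 7 / 6 * R ^ 2 ≤ ρ ^ 2 - ‖z‖ ^ 2 := by
            nlinarith [sq_nonneg (R - 72)]
          exact le_trans h5 (le_abs_self _)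
        refine le_trans (aux_term_bound hρ0 z hcpos habs) ?_
        rw [div_le_div_iff₀ hcpos (by linarith)]
        nlinarith [mul_le_mul_of_nonneg_left hz2 hRpos.le]
    -- bound for indices `m = j+1 > n`
    have key2 : ∀ j : ℕ, n < j + 1 → ‖F j‖ ≤ 3 / 2 * R / (rSeq M (j + 1)) ^ 2 := by
      intro j hj
      have hm1 : 1 ≤ j + 1 := Nat.le_add_left 1 j
      set rm := rSeq M (j + 1) with hrmdef
      have hrmpos : 0 < rm := aux_rSeq_pos hM _
      have hrm144 : 144 ≤ rm := by
        have h1 : rSeq M 2 ≤ rm := aux_rSeq_mono hM (by omega)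
        have h2 : rSeq M 2 = M * 4 := by unfold rSeq; norm_num
        rw [h2] at h1; linarith
      have h2R : 2 * R ≤ rm := by
        have h1 := aux_rSeq_mono hM (show n + 1 ≤ j + 1 from by omega)
        rw [aux_rSeq_succ, ← hRdef] at h1; exact h1
      simp only [hFdef]
      apply aux_avg_bound (aux_kSeq_pos hlam hM hm1)
      intro k hk
      rw [Finset.mem_Icc] at hk
      set ρ := rnk lam M (j + 1) k with hρdef
      have hρge : 2 * rm - 1 ≤ ρ := by
        have h1 : rSeq M (j + 1 + 1) - 1 ≤ ρ := aux_rnk_ge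
        rw [aux_rSeq_succ, ← hrmdef] at h1; exact h1
      have hρ0 : 0 ≤ ρ := by linarith
      have hz56 : ‖z‖ ≤ 5 / 6 * rm := by linarith
      have hsq : (2 * rm - 1) * (2 * rm - 1) ≤ ρ * ρ :=
        mul_le_mul hρge hρge (by linarith) hρ0
      have hzsq : ‖z‖ * ‖z‖ ≤ (5 / 6 * rm) * (5 / 6 * rm) :=
        mul_le_mul hz56 hz56 (norm_nonneg z) (by linarith)
      have hcpos : (0:ℝ) < 59 / 18 * rm ^ 2 :=
        mul_pos (by norm_num) (pow_pos hrmpos 2)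
      have habs : 59 / 18 * rm ^ 2 ≤ |ρ ^ 2 - ‖z‖ ^ 2| := by
        have h5 : 59 / 18 * rm ^ 2 ≤ ρ ^ 2 - ‖z‖ ^ 2 := by
          nlinarith [sq_nonneg (rm - 144)]
        exact le_trans h5 (le_abs_self _)
      refine le_trans (aux_term_bound hρ0 z hcpos habs) ?_
      rw [div_le_div_iff₀ hcpos (by positivity)]
      nlinarith [mul_le_mul_of_nonneg_right (show ‖z‖ ≤ 5 / 3 * R from hz2) (sq_nonneg rm),
        mul_nonneg hRpos.le (sq_nonneg rm)]
    -- geometric tail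
    set c : ℝ := 3 / 2 * R / (M ^ 2 * 4 ^ (n + 1)) with hcdef
    have hbt : ∀ j : ℕ, 3 / 2 * R / (rSeq M (j + n + 1)) ^ 2 = c * (1 / 4 : ℝ) ^ j := by
      intro j
      have h1 : (rSeq M (j + n + 1)) ^ 2 = M ^ 2 * 4 ^ (n + 1) * 4 ^ j := by
        unfold rSeq
        rw [mul_pow, aux_pow_sq, show j + n + 1 = (n + 1) + j from by omega, pow_add]
        ring
      rw [hcdef, h1, div_pow, one_pow]
      have h2 : (0:ℝ) < M ^ 2 * 4 ^ (n + 1) := by positivity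
      have h3 : (0:ℝ) < (4:ℝ) ^ j := by positivity
      field_simp
    have hgeo : Summable (fun j : ℕ => c * (1 / 4 : ℝ) ^ j) :=
      (summable_geometric_of_lt_one (by norm_num) (by norm_num)).mul_left c
    have hFtail : ∀ j : ℕ, ‖F (j + n)‖ ≤ c * (1 / 4 : ℝ) ^ j := by
      intro j
      rw [← hbt j]
      exact key2 (j + n) (by omega)
    have hsum_tail : Summable fun j : ℕ => ‖F (j + n)‖ :=
      Summable.of_nonneg_of_le (fun j => norm_nonneg _) hFtail hgeo
    have hsum : Summable fun j : ℕ => ‖F j‖ := (summable_nat_add_iff n).mp hsum_tail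
    have htail : ∑' j : ℕ, ‖F (j + n)‖ ≤ 1 / (2 * R) := by
      have h1 : ∑' j : ℕ, ‖F (j + n)‖ ≤ ∑' j : ℕ, c * (1 / 4 : ℝ) ^ j :=
        Summable.tsum_le_tsum hFtail hsum_tail hgeo
      have h2 : ∑' j : ℕ, c * (1 / 4 : ℝ) ^ j = c * (4 / 3) := by
        rw [tsum_mul_left, tsum_geometric_of_lt_one (by norm_num) (by norm_num)]
        norm_num
      have hR2 : R ^ 2 = M ^ 2 * 4 ^ n := by
        rw [hRdef]; unfold rSeq; rw [mul_pow, aux_pow_sq]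
      have h4 : M ^ 2 * 4 ^ (n + 1) = 4 * R ^ 2 := by rw [hR2, pow_succ]; ring
      have hRne : R ≠ 0 := ne_of_gt hRpos
      have h3 : c * (4 / 3) = 1 / (2 * R) := by
        rw [hcdef, h4]
        field_simp
      rw [h2, h3] at h1
      exact h1
    have hhead : ∑ i ∈ Finset.range n, ‖F i‖ ≤ n * (24 / (7 * R)) := by
      calc ∑ i ∈ Finset.range n, ‖F i‖
          ≤ ∑ _i ∈ Finset.range n, 24 / (7 * R) :=
            Finset.sum_le_sum fun i hi => key1 i (by
              rw [Finset.mem_range] at hi; omega)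
        _ = n * (24 / (7 * R)) := by
            rw [Finset.sum_const, nsmul_eq_mul, Finset.card_range]
    calc ‖gFun lam M z‖ = ‖∑' j, F j‖ := by rw [hgz]
      _ ≤ ∑' j, ‖F j‖ := norm_tsum_le_tsum_norm hsum
      _ = ∑ i ∈ Finset.range n, ‖F i‖ + ∑' j, ‖F (j + n)‖ :=
          (Summable.sum_add_tsum_nat_add n hsum).symm
      _ ≤ n * (24 / (7 * R)) + 1 / (2 * R) := add_le_add hhead htail
      _ ≤ 30 * n / (7 * R) + 4 / R := by
          have hn0 : (0:ℝ) ≤ (n : ℝ) := Nat.cast_nonneg n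
          have h1 : (n : ℝ) * (24 / (7 * R)) ≤ 30 * n / (7 * R) := by
            rw [← mul_div_assoc, div_le_div_iff₀ (by linarith) (by linarith)]
            nlinarith [mul_nonneg hn0 hRpos.le]
          have h2 : 1 / (2 * R) ≤ 4 / R := by
            rw [div_le_div_iff₀ (by linarith) (by linarith)]
            nlinarith
          linarith
  refine ⟨main, ?_⟩
  -- the upper bound tends to zero
  have hBtend : Tendsto (fun n : ℕ => 30 * (n : ℝ) / (7 * rSeq M n) + 4 / rSeq M n)
      atTop (𝓝 0) := by
    have e : ∀ n : ℕ, 30 * (n : ℝ) / (7 * rSeq M n) + 4 / rSeq M n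
        = 30 / (7 * M) * ((n : ℝ) * (1 / 2 : ℝ) ^ n) + 4 / M * (1 / 2 : ℝ) ^ n := by
      intro n
      have h2 : (0:ℝ) < (2:ℝ) ^ n := by positivity
      have hMne : M ≠ 0 := ne_of_gt hM0
      unfold rSeq
      rw [div_pow, one_pow]
      field_simp
    have t1 : Tendsto (fun n : ℕ => 30 / (7 * M) * ((n : ℝ) * (1 / 2 : ℝ) ^ n))
        atTop (𝓝 (30 / (7 * M) * 0)) :=
      (tendsto_self_mul_const_pow_of_lt_one (by norm_num) (by norm_num)).const_mul _
    have t2 : Tendsto (fun n : ℕ => 4 / M * (1 / 2 : ℝ) ^ n)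
        atTop (𝓝 (4 / M * 0)) :=
      (tendsto_pow_atTop_nhds_zero_of_lt_one (by norm_num) (by norm_num)).const_mul _
    have t3 := t1.add t2
    refine Tendsto.congr (fun n => (e n).symm) ?_
    simpa using t3
  have hub : ∀ n : ℕ, 1 ≤ n → ∀ x ∈ {x : ℝ | ∃ z : ℂ,
      4 / 3 * rSeq M n ≤ ‖z‖ ∧ ‖z‖ ≤ 5 / 3 * rSeq M n ∧ x = ‖gFun lam M z‖},
      x ≤ 30 * (n : ℝ) / (7 * rSeq M n) + 4 / rSeq M n := by
    rintro n hn x ⟨z, hz1, hz2, rfl⟩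
    exact main n hn z hz1 hz2
  have hmem : ∀ n : ℕ, ‖gFun lam M (((4 / 3 * rSeq M n : ℝ)) : ℂ)‖ ∈ {x : ℝ | ∃ z : ℂ,
      4 / 3 * rSeq M n ≤ ‖z‖ ∧ ‖z‖ ≤ 5 / 3 * rSeq M n ∧ x = ‖gFun lam M z‖} := by
    intro n
    have hRpos := aux_rSeq_pos hM n
    have hn1 : ‖(((4 / 3 * rSeq M n : ℝ)) : ℂ)‖ = 4 / 3 * rSeq M n := by
      rw [Complex.norm_real, Real.norm_eq_abs, abs_of_nonneg (by linarith)]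
    exact ⟨_, by rw [hn1], by rw [hn1]; linarith, rfl⟩
  apply squeeze_zero' ?_ ?_ hBtend
  · filter_upwards [eventually_ge_atTop 1] with n hn
    have hbdd : BddAbove {x : ℝ | ∃ z : ℂ,
        4 / 3 * rSeq M n ≤ ‖z‖ ∧ ‖z‖ ≤ 5 / 3 * rSeq M n ∧ x = ‖gFun lam M z‖} :=
      ⟨_, fun x hx => hub n hn x hx⟩
    exact le_trans (norm_nonneg _) (le_csSup hbdd (hmem n))
  · filter_upwards [eventually_ge_atTop 1] with n hn
    exact csSup_le ⟨_, hmem n⟩ (fun x hx => hub n hn x hx)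

end PaperDyn
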